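/- arXiv:math/0610065 — 2 statements merged into one kernel-verified Lean document; each statement's English description precedes it below -/
import Mathlib

section
/- Suppose r is strictly plurisubharmonic at 0. Then there exists an open neighborhood V ⊆ U of 0 such that for every z ∈ V with ρ(z) < 0 and every w ∈ V with r(w, conj z) = 0 (i.e. w ∈ Q_z ∩ V) one has ρ(w) ≥ −ρ(z) > 0; in particular Q_z ∩ V ⊆ U⁺. If in addition there are constants κ, K > 0 with κ·dist(ζ, M) ≤ |ρ(ζ)| ≤ K·dist(ζ, M) for all ζ ∈ V, then there is a constant c > 0 such that dist(w, M) ≥ c·dist(z, M) for every such z and w. -/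
open Metric Complex

/-- Componentwise complex conjugation on `ℂⁿ`. -/
noncomputable def conjE {n : ℕ} (z : EuclideanSpace ℂ (Fin n)) :
    EuclideanSpace ℂ (Fin n) := WithLp.toLp 2 (fun i => (starRingEnd ℂ) (z i))

/-- Conjugation as a real-linear isometry. -/
noncomputable def conjLI (n : ℕ) :
    EuclideanSpace ℂ (Fin n) →ₗᵢ[ℝ] EuclideanSpace ℂ (Fin n) where
  toLinearMap :=
  { toFun := conjE
    map_add' := by intro x y; ext i; simp [conjE]
    map_smul' := by intro c x; ext i; simp [conjE] }
  norm_map' := by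
    intro x
    simp only [LinearMap.coe_mk, AddHom.coe_mk]
    rw [EuclideanSpace.norm_eq, EuclideanSpace.norm_eq]
    congr 1
    exact Finset.sum_congr rfl fun i _ => by simp [conjE]

lemma norm_conjE {n : ℕ} (z : EuclideanSpace ℂ (Fin n)) : ‖conjE z‖ = ‖z‖ :=
  (conjLI n).norm_map z

lemma conjE_conjE {n : ℕ} (z : EuclideanSpace ℂ (Fin n)) : conjE (conjE z) = z := by
  ext i; simp [conjE]

lemma conjE_add {n : ℕ} (x y : EuclideanSpace ℂ (Fin n)) :
    conjE (x + y) = conjE x + conjE y := (conjLI n).map_add x y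

lemma conjE_real_smul {n : ℕ} (c : ℝ) (x : EuclideanSpace ℂ (Fin n)) :
    conjE (c • x) = c • conjE x := (conjLI n).map_smul c x

/-- Cauchy estimate for the second derivative at the center. -/
lemma cauchy_deriv2_bound {f : ℂ → ℂ} {R C : ℝ} (hR : 0 < R)
    (hd : DifferentiableOn ℂ f (closedBall 0 R))
    (hC : ∀ ζ ∈ sphere (0:ℂ) R, ‖f ζ‖ ≤ C) :
    ‖deriv (deriv f) 0‖ ≤ 2 * C / R ^ 2 := by
  lift R to NNReal using hR.le with R₀
  have hR0 : 0 < R₀ := by exact_mod_cast hR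
  have h := hd.hasFPowerSeriesOnBall hR0
  set p := cauchyPowerSeries f 0 R₀ with hp
  have h2 : (Nat.factorial 2) • p 2 (fun _ => (1:ℂ)) = iteratedFDeriv ℂ 2 f 0 (fun _ => (1:ℂ)) :=
    h.factorial_smul (1:ℂ) 2
  have hit : iteratedFDeriv ℂ 2 f 0 (fun _ => (1:ℂ)) = deriv (deriv f) 0 := by
    have : iteratedDeriv 2 f 0 = deriv (deriv f) 0 := by
      rw [iteratedDeriv_succ, iteratedDeriv_one]
    rw [← this, iteratedDeriv]
  have hval : deriv (deriv f) 0 = 2 • p 2 (fun _ => (1:ℂ)) := by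
    rw [← hit, ← h2]; norm_num [Nat.factorial]
  have hnorm : ‖p 2 (fun _ => (1:ℂ))‖ ≤ ‖p 2‖ := by
    have := (p 2).le_opNorm (fun _ => (1:ℂ))
    simpa using this
  have hcont : ContinuousOn (fun θ : ℝ => ‖f (circleMap 0 R₀ θ)‖) (Set.uIcc 0 (2*Real.pi)) := by
    apply ContinuousOn.norm
    apply hd.continuousOn.comp (continuous_circleMap 0 R₀).continuousOn
    intro θ _
    have : circleMap 0 R₀ θ ∈ sphere (0:ℂ) R₀ := circleMap_mem_sphere _ hR.le _
    exact sphere_subset_closedBall this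
  have hCnonneg : 0 ≤ C := by
    have : circleMap 0 R₀ 0 ∈ sphere (0:ℂ) R₀ := circleMap_mem_sphere _ hR.le _
    exact le_trans (norm_nonneg _) (hC _ this)
  have hint : (∫ θ : ℝ in (0)..2 * Real.pi, ‖f (circleMap 0 R₀ θ)‖) ≤ 2 * Real.pi * C := by
    have h1 : (∫ θ : ℝ in (0)..2 * Real.pi, ‖f (circleMap 0 R₀ θ)‖) ≤
        ∫ _ : ℝ in (0)..2 * Real.pi, C := by
      apply intervalIntegral.integral_mono_on Real.two_pi_pos.le
      · exact hcont.intervalIntegrable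
      · exact intervalIntegrable_const
      · intro θ _
        exact hC _ (circleMap_mem_sphere _ hR.le _)
    simpa [mul_comm] using h1
  have hple : ‖p 2‖ ≤ ((2 * Real.pi)⁻¹ * ∫ θ : ℝ in (0)..2 * Real.pi,
      ‖f (circleMap 0 R₀ θ)‖) * |(R₀:ℝ)|⁻¹ ^ 2 := norm_cauchyPowerSeries_le f 0 R₀ 2
  have habs : |(R₀:ℝ)| = (R₀:ℝ) := abs_of_pos hR
  have hfinal : ‖p 2‖ ≤ C / (R₀:ℝ) ^ 2 := by
    refine hple.trans ?_
    rw [habs]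
    have h1 : (2 * Real.pi)⁻¹ * (∫ θ : ℝ in (0)..2 * Real.pi, ‖f (circleMap 0 R₀ θ)‖) ≤ C := by
      rw [inv_mul_le_iff₀ (by positivity)]
      exact hint
    calc (2 * Real.pi)⁻¹ * (∫ θ : ℝ in (0)..2 * Real.pi, ‖f (circleMap 0 R₀ θ)‖) * ((R₀:ℝ))⁻¹ ^ 2
        ≤ C * ((R₀:ℝ))⁻¹ ^ 2 := by
          apply mul_le_mul_of_nonneg_right h1 (by positivity)
      _ = C / (R₀:ℝ) ^ 2 := by field_simp
  rw [hval]
  calc ‖(2:ℕ) • p 2 (fun _ => (1:ℂ))‖ = ‖p 2 (fun _ => (1:ℂ)) + p 2 (fun _ => (1:ℂ))‖ := by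
        rw [two_smul]
    _ ≤ ‖p 2 (fun _ => (1:ℂ))‖ + ‖p 2 (fun _ => (1:ℂ))‖ := norm_add_le _ _
    _ ≤ (C / (R₀:ℝ) ^ 2) + (C / (R₀:ℝ) ^ 2) := add_le_add (hnorm.trans hfinal) (hnorm.trans hfinal)
    _ = 2 * C / (R₀:ℝ) ^ 2 := by ring

section Slice

variable {P : Type*} [NormedAddCommGroup P] [NormedSpace ℂ P]

/-- Chain rule along a complex line. -/
lemma slice_hasDerivAt {r : P → ℂ} {q b : P} {t : ℂ}
    (hr : DifferentiableAt ℂ r (q + t • b)) :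
    HasDerivAt (fun s : ℂ => r (q + s • b)) (fderiv ℂ r (q + t • b) b) t := by
  have hcurve : HasDerivAt (fun s : ℂ => q + s • b) b t := by
    simpa using ((hasDerivAt_id t).smul_const b).const_add q
  exact hr.hasFDerivAt.comp_hasDerivAt t hcurve

/-- Second derivative of a slice through a point where `fderiv ℂ r` is differentiable. -/
lemma slice_deriv2_eq {r : P → ℂ} {W : Set P} (hW : IsOpen W)
    (hr : DifferentiableOn ℂ r W) {q : P} (hq : q ∈ W)
    {B : P →L[ℂ] P →L[ℂ] ℂ} (hB : HasFDerivAt (fderiv ℂ r) B q) (b : P) :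
    deriv (deriv (fun s : ℂ => r (q + s • b))) 0 = B b b := by
  have hΩ : IsOpen {s : ℂ | q + s • b ∈ W} :=
    hW.preimage (by continuity)
  have h0 : (0:ℂ) ∈ {s : ℂ | q + s • b ∈ W} := by simp [hq]
  have hEq : deriv (fun s : ℂ => r (q + s • b)) =ᶠ[nhds 0]
      (fun s : ℂ => fderiv ℂ r (q + s • b) b) := by
    filter_upwards [hΩ.mem_nhds h0] with s hs
    exact (slice_hasDerivAt ((hr _ hs).differentiableAt (hW.mem_nhds hs))).deriv
  rw [hEq.deriv_eq]
  have hcurve : HasDerivAt (fun s : ℂ => q + s • b) b 0 := by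
    simpa using ((hasDerivAt_id (0:ℂ)).smul_const b).const_add q
  have h1 : HasDerivAt (fun s : ℂ => fderiv ℂ r (q + s • b)) (B b) 0 := by
    have hB' : HasFDerivAt (fderiv ℂ r) B (q + (0:ℂ) • b) := by simpa using hB
    have := hB'.comp_hasDerivAt 0 hcurve
    exact this
  have h2 : HasDerivAt (fun s : ℂ => fderiv ℂ r (q + s • b) b) (B b b) 0 := by
    have := (ContinuousLinearMap.apply ℂ ℂ b).hasFDerivAt.comp_hasDerivAt 0 h1
    exact this
  exact h2.deriv

/-- Linearity of second derivative for analytic functions. -/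
lemma deriv2_sub {u v : ℂ → ℂ} {Ω : Set ℂ} (hΩ : IsOpen Ω) (h0 : (0:ℂ) ∈ Ω)
    (hu : DifferentiableOn ℂ u Ω) (hv : DifferentiableOn ℂ v Ω) :
    deriv (deriv (fun s => u s - v s)) 0 = deriv (deriv u) 0 - deriv (deriv v) 0 := by
  have huA : AnalyticOnNhd ℂ u Ω := hu.analyticOnNhd hΩ
  have hvA : AnalyticOnNhd ℂ v Ω := hv.analyticOnNhd hΩ
  have hEq : deriv (fun s => u s - v s) =ᶠ[nhds 0] (fun s => deriv u s - deriv v s) := by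
    filter_upwards [hΩ.mem_nhds h0] with s hs
    exact deriv_sub ((huA s hs).differentiableAt) ((hvA s hs).differentiableAt)
  rw [hEq.deriv_eq]
  exact deriv_sub ((huA.deriv 0 h0).differentiableAt) ((hvA.deriv 0 h0).differentiableAt)

/-- Translation of the second derivative. -/
lemma deriv2_comp_const_add (u : ℂ → ℂ) (t : ℂ) :
    deriv (deriv (fun s => u (t + s))) 0 = deriv (deriv u) t := by
  have h1 : deriv (fun s => u (t + s)) = fun s => deriv u (t + s) :=
    funext fun x => deriv_comp_const_add u t x
  rw [h1, deriv_comp_const_add (deriv u) t 0, add_zero]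

end Slice

section Key

local notation "E'" n => EuclideanSpace ℂ (Fin n)

set_option maxHeartbeats 4000000 in
lemma key_ineq (n : ℕ) (hn : 1 ≤ n)
    (U : Set (EuclideanSpace ℂ (Fin n))) (hU : IsOpen U)
    (h0U : (0 : EuclideanSpace ℂ (Fin n)) ∈ U)
    (r : EuclideanSpace ℂ (Fin n) × EuclideanSpace ℂ (Fin n) → ℂ)
    (hr : DifferentiableOn ℂ r (U ×ˢ U))
    (hpsh : ∀ v : EuclideanSpace ℂ (Fin n), v ≠ 0 →
      0 < (fderiv ℂ (fderiv ℂ r) (0, 0) (v, 0) (0, conjE v)).re) :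
    ∃ δ : ℝ, 0 < δ ∧ Metric.ball (0 : EuclideanSpace ℂ (Fin n)) δ ⊆ U ∧
      ∀ z ∈ Metric.ball (0 : EuclideanSpace ℂ (Fin n)) δ,
      ∀ w ∈ Metric.ball (0 : EuclideanSpace ℂ (Fin n)) δ,
        (r (z, conjE w) + r (w, conjE z) - r (w, conjE w)).re ≤ (r (z, conjE z)).re := by
  classical
  set W : Set (EuclideanSpace ℂ (Fin n) × EuclideanSpace ℂ (Fin n)) := U ×ˢ U with hWdef
  have hW : IsOpen W := hU.prod hU
  have h0W : ((0, 0) : EuclideanSpace ℂ (Fin n) × EuclideanSpace ℂ (Fin n)) ∈ W :=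
    Set.mk_mem_prod h0U h0U
  -- nontrivial vector
  have hv0 : (EuclideanSpace.single (⟨0, hn⟩ : Fin n) (1:ℂ)) ≠ 0 := by
    intro h
    have := congrArg (fun x : EuclideanSpace ℂ (Fin n) => x (⟨0, hn⟩ : Fin n)) h
    simp [EuclideanSpace.single_apply] at this
  by_cases hdiff : DifferentiableAt ℂ (fderiv ℂ r)
      ((0, 0) : EuclideanSpace ℂ (Fin n) × EuclideanSpace ℂ (Fin n))
  swap
  · exfalso
    have hz := fderiv_zero_of_not_differentiableAt hdiff
    have := hpsh _ hv0
    rw [hz] at this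
    simp at this
  set B := fderiv ℂ (fderiv ℂ r)
      ((0, 0) : EuclideanSpace ℂ (Fin n) × EuclideanSpace ℂ (Fin n)) with hBdef
  have hB : HasFDerivAt (fderiv ℂ r) B ((0, 0) :
      EuclideanSpace ℂ (Fin n) × EuclideanSpace ℂ (Fin n)) := hdiff.hasFDerivAt
  have hev : ∀ᶠ y in nhds ((0, 0) :
      EuclideanSpace ℂ (Fin n) × EuclideanSpace ℂ (Fin n)), HasFDerivAt r (fderiv ℂ r y) y := by
    filter_upwards [hW.mem_nhds h0W] with y hy
    exact ((hr y hy).differentiableAt (hW.mem_nhds hy)).hasFDerivAt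
  have hsymm : ∀ a b, B a b = B b a := fun a b =>
    second_derivative_symmetric_of_eventually hev hB a b
  -- the Levi form minimum on the unit sphere
  set φ : EuclideanSpace ℂ (Fin n) → ℝ := fun x => 2 * (B (x, 0) (0, conjE x)).re with hφdef
  have hφcont : Continuous φ := by
    have h1 : Continuous fun x : EuclideanSpace ℂ (Fin n) => B (x, 0) :=
      B.continuous.comp (continuous_id.prodMk continuous_const)
    have h2 : Continuous fun x : EuclideanSpace ℂ (Fin n) =>
        (((0 : EuclideanSpace ℂ (Fin n)), conjE x) :
          EuclideanSpace ℂ (Fin n) × EuclideanSpace ℂ (Fin n)) := by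
      refine continuous_const.prodMk ?_
      exact (conjLI n).continuous
    exact continuous_const.mul (Complex.continuous_re.comp (h1.clm_apply h2))
  have hsph : IsCompact (sphere (0 : EuclideanSpace ℂ (Fin n)) 1) := isCompact_sphere _ _
  have hsphne : (sphere (0 : EuclideanSpace ℂ (Fin n)) 1).Nonempty := by
    refine ⟨EuclideanSpace.single (⟨0, hn⟩ : Fin n) (1:ℂ), ?_⟩
    simp [EuclideanSpace.norm_single]
  obtain ⟨v₀, hv₀mem, hv₀min⟩ := hsph.exists_isMinOn hsphne hφcont.continuousOn
  set c := φ v₀ with hcdef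
  have hc : 0 < c := by
    have hv₀ne : v₀ ≠ 0 := by
      intro h
      rw [h] at hv₀mem
      simp at hv₀mem
    have := hpsh v₀ hv₀ne
    simpa [hφdef, hcdef] using by positivity
  have hmin : ∀ x ∈ sphere (0 : EuclideanSpace ℂ (Fin n)) 1, c ≤ φ x :=
    fun x hx => hv₀min hx
  -- radius of a closed ball inside W
  obtain ⟨δ₁, hδ₁pos, hδ₁⟩ : ∃ δ₁ > 0, closedBall
      ((0,0) : EuclideanSpace ℂ (Fin n) × EuclideanSpace ℂ (Fin n)) δ₁ ⊆ W := by
    rcases Metric.nhds_basis_closedBall.mem_iff.1 (hW.mem_nhds h0W) with ⟨δ₁, h1, h2⟩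
    exact ⟨δ₁, h1, h2⟩
  set R := δ₁ / 2 with hRdef
  have hRpos : 0 < R := by positivity
  set ε₁ := c * R ^ 2 / 16 with hε₁def
  have hε₁pos : 0 < ε₁ := by positivity
  -- uniform continuity of r on the compact closed ball
  have hKcomp : IsCompact (closedBall
      ((0,0) : EuclideanSpace ℂ (Fin n) × EuclideanSpace ℂ (Fin n)) δ₁) :=
    isCompact_closedBall _ _
  have hrcont : ContinuousOn r (closedBall
      ((0,0) : EuclideanSpace ℂ (Fin n) × EuclideanSpace ℂ (Fin n)) δ₁) :=
    (hr.continuousOn).mono hδ₁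
  have huc := hKcomp.uniformContinuousOn_of_continuous hrcont
  rw [Metric.uniformContinuousOn_iff] at huc
  obtain ⟨δ₂, hδ₂pos, hδ₂⟩ := huc ε₁ hε₁pos
  -- the final radius
  set δ := min (δ₁ / 8) (δ₂ / 4) with hδdef
  have hδpos : 0 < δ := lt_min (by positivity) (by positivity)
  have hδle₁ : 3 * δ < δ₁ / 2 := by
    have : δ ≤ δ₁ / 8 := min_le_left _ _
    nlinarith
  have hδle₂ : 3 * δ < δ₂ := by
    have : δ ≤ δ₂ / 4 := min_le_right _ _
    nlinarith
  have hballW : Metric.ball ((0,0) : EuclideanSpace ℂ (Fin n) × EuclideanSpace ℂ (Fin n)) δ₁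
      ⊆ W := (ball_subset_closedBall).trans hδ₁
  -- THE COMPARISON ESTIMATE (via Cauchy integrals on complex lines)
  have CMP : ∀ q : EuclideanSpace ℂ (Fin n) × EuclideanSpace ℂ (Fin n), ‖q‖ ≤ 3 * δ →
      ∀ b : EuclideanSpace ℂ (Fin n) × EuclideanSpace ℂ (Fin n), ‖b‖ ≤ 1 →
      ‖deriv (deriv (fun s : ℂ => r (q + s • b))) 0 - B b b‖ ≤ c / 8 := by
    intro q hq b hb
    have hq₁ : ‖q‖ < δ₁ / 2 := lt_of_le_of_lt hq hδle₁
    have hq₂ : ‖q‖ < δ₂ := lt_of_le_of_lt hq hδle₂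
    -- the two slice domains
    set Ω : Set ℂ := {s : ℂ | q + s • b ∈ Metric.ball ((0,0) :
        EuclideanSpace ℂ (Fin n) × EuclideanSpace ℂ (Fin n)) δ₁ ∧
        (0 : EuclideanSpace ℂ (Fin n) × EuclideanSpace ℂ (Fin n)) + s • b ∈ Metric.ball ((0,0) :
        EuclideanSpace ℂ (Fin n) × EuclideanSpace ℂ (Fin n)) δ₁} with hΩdef
    have hΩopen : IsOpen Ω := by
      apply IsOpen.inter
      · exact isOpen_ball.preimage (by continuity)
      · exact isOpen_ball.preimage (by continuity)
    have hzero : ((0,0) : EuclideanSpace ℂ (Fin n) × EuclideanSpace ℂ (Fin n)) =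
        (0 : EuclideanSpace ℂ (Fin n) × EuclideanSpace ℂ (Fin n)) := rfl
    have hdisc : closedBall (0:ℂ) R ⊆ Ω := by
      intro s hs
      rw [mem_closedBall, dist_zero_right] at hs
      constructor
      · rw [mem_ball, dist_eq_norm, hzero, sub_zero]
        calc ‖q + s • b‖ ≤ ‖q‖ + ‖s • b‖ := norm_add_le _ _
          _ ≤ ‖q‖ + ‖s‖ * ‖b‖ := by rw [norm_smul]
          _ ≤ ‖q‖ + R * 1 := by
              gcongr
          _ < δ₁ / 2 + R := by rw [mul_one]; linarith
          _ = δ₁ := by rw [hRdef]; ring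
      · rw [mem_ball, dist_eq_norm, hzero, sub_zero, zero_add]
        calc ‖s • b‖ ≤ ‖s‖ * ‖b‖ := by rw [norm_smul]
          _ ≤ R * 1 := by gcongr
          _ < δ₁ := by rw [mul_one, hRdef]; linarith
    -- slices are differentiable on Ω
    have hsl : ∀ q' : EuclideanSpace ℂ (Fin n) × EuclideanSpace ℂ (Fin n),
        (∀ s ∈ Ω, q' + s • b ∈ Metric.ball ((0,0) :
          EuclideanSpace ℂ (Fin n) × EuclideanSpace ℂ (Fin n)) δ₁) →
        DifferentiableOn ℂ (fun s : ℂ => r (q' + s • b)) Ω := by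
      intro q' hmaps
      apply DifferentiableOn.comp (hr.mono hballW)
      · intro s _
        exact (differentiable_const q' |>.add ((differentiable_id.smul_const b))).differentiableAt
          |>.differentiableWithinAt
      · intro s hs
        exact hmaps s hs
    have hu : DifferentiableOn ℂ (fun s : ℂ => r (q + s • b)) Ω :=
      hsl q (fun s hs => hs.1)
    have hv : DifferentiableOn ℂ (fun s : ℂ => r ((0 :
        EuclideanSpace ℂ (Fin n) × EuclideanSpace ℂ (Fin n)) + s • b)) Ω :=
      hsl 0 (fun s hs => hs.2)
    have h0Ω : (0:ℂ) ∈ Ω := hdisc (mem_closedBall_self hRpos.le)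
    -- second derivative of the centered slice is B b b
    have hcenter : deriv (deriv (fun s : ℂ => r ((0 :
        EuclideanSpace ℂ (Fin n) × EuclideanSpace ℂ (Fin n)) + s • b))) 0 = B b b := by
      apply slice_deriv2_eq hW hr h0W
      exact hB
    -- Cauchy estimate for the difference
    have hdiff2 : deriv (deriv (fun s : ℂ => r (q + s • b) - r ((0 :
        EuclideanSpace ℂ (Fin n) × EuclideanSpace ℂ (Fin n)) + s • b))) 0 =
        deriv (deriv (fun s : ℂ => r (q + s • b))) 0 - deriv (deriv (fun s : ℂ => r ((0 :
        EuclideanSpace ℂ (Fin n) × EuclideanSpace ℂ (Fin n)) + s • b))) 0 :=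
      deriv2_sub hΩopen h0Ω hu hv
    have hsub : DifferentiableOn ℂ (fun s : ℂ => r (q + s • b) - r ((0 :
        EuclideanSpace ℂ (Fin n) × EuclideanSpace ℂ (Fin n)) + s • b)) (closedBall (0:ℂ) R) :=
      ((hu.sub hv).mono hdisc)
    have hbound : ∀ ζ ∈ sphere (0:ℂ) R, ‖r (q + ζ • b) - r ((0 :
        EuclideanSpace ℂ (Fin n) × EuclideanSpace ℂ (Fin n)) + ζ • b)‖ ≤ ε₁ := by
      intro ζ hζ
      rw [mem_sphere, dist_zero_right] at hζ
      have hζΩ : ζ ∈ Ω := hdisc (by rw [mem_closedBall, dist_zero_right, hζ])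
      have hmem1 : q + ζ • b ∈ closedBall ((0,0) :
          EuclideanSpace ℂ (Fin n) × EuclideanSpace ℂ (Fin n)) δ₁ :=
        ball_subset_closedBall hζΩ.1
      have hmem2 : (0 : EuclideanSpace ℂ (Fin n) × EuclideanSpace ℂ (Fin n)) + ζ • b ∈
          closedBall ((0,0) : EuclideanSpace ℂ (Fin n) × EuclideanSpace ℂ (Fin n)) δ₁ :=
        ball_subset_closedBall hζΩ.2
      have hdist : dist (q + ζ • b) ((0 :
          EuclideanSpace ℂ (Fin n) × EuclideanSpace ℂ (Fin n)) + ζ • b) < δ₂ := by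
        rw [dist_eq_norm]
        simpa using hq₂
      have := hδ₂ _ hmem1 _ hmem2 hdist
      rw [dist_eq_norm] at this
      exact this.le
    have hcb := cauchy_deriv2_bound hRpos hsub hbound
    rw [hdiff2, hcenter] at hcb
    calc ‖deriv (deriv (fun s : ℂ => r (q + s • b))) 0 - B b b‖ ≤ 2 * ε₁ / R ^ 2 := hcb
      _ = c / 8 := by
        rw [hε₁def]
        field_simp
        ring
  have hδδ₁ : δ < δ₁ := by nlinarith [hδle₁, hδpos]
  refine ⟨δ, hδpos, ?_, ?_⟩
  · -- ball δ ⊆ U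
    intro z hz
    rw [mem_ball, dist_zero_right] at hz
    have hm : ((z, z) : EuclideanSpace ℂ (Fin n) × EuclideanSpace ℂ (Fin n)) ∈
        Metric.ball ((0,0) : EuclideanSpace ℂ (Fin n) × EuclideanSpace ℂ (Fin n)) δ₁ := by
      rw [mem_ball, dist_eq_norm]
      have : ‖((z, z) : EuclideanSpace ℂ (Fin n) × EuclideanSpace ℂ (Fin n)) - (0,0)‖ = ‖z‖ := by
        simp [Prod.norm_def]
      rw [this]
      exact hz.trans hδδ₁
    exact (hballW hm).1
  · intro z hz w hw
    rw [mem_ball, dist_zero_right] at hz hw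
    by_cases hzw : w = z
    · subst hzw
      have : r (w, conjE w) + r (w, conjE w) - r (w, conjE w) = r (w, conjE w) := by ring
      rw [this]
    · -- main case: `w ≠ z`
      have hzero : (((0,0)) : EuclideanSpace ℂ (Fin n) × EuclideanSpace ℂ (Fin n)) =
          (0 : EuclideanSpace ℂ (Fin n) × EuclideanSpace ℂ (Fin n)) := rfl
      have hvne : w - z ≠ 0 := sub_ne_zero.mpr hzw
      set T := ‖w - z‖ with hTdef
      have hT : 0 < T := norm_pos_iff.mpr hvne
      set vh : EuclideanSpace ℂ (Fin n) := T⁻¹ • (w - z) with hvhdef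
      have hvh1 : ‖vh‖ = 1 := by
        rw [hvhdef, norm_smul, norm_inv, Real.norm_eq_abs, abs_of_pos hT, ← hTdef,
          inv_mul_cancel₀ hT.ne']
      have hTv : (T:ℝ) • vh = w - z := smul_inv_smul₀ hT.ne' _
      have hcoe : ∀ (t : ℝ) (x : EuclideanSpace ℂ (Fin n)), ((t:ℝ):ℂ) • x = t • x :=
        fun t x => algebraMap_smul ℂ t x
      set a : EuclideanSpace ℂ (Fin n) × EuclideanSpace ℂ (Fin n) := (z, conjE z) with hadef
      set b₁ : EuclideanSpace ℂ (Fin n) × EuclideanSpace ℂ (Fin n) :=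
        ((0 : EuclideanSpace ℂ (Fin n)), conjE vh) with hb₁def
      set b₂ : EuclideanSpace ℂ (Fin n) × EuclideanSpace ℂ (Fin n) :=
        (vh, (0 : EuclideanSpace ℂ (Fin n))) with hb₂def
      set b₃ : EuclideanSpace ℂ (Fin n) × EuclideanSpace ℂ (Fin n) := b₁ + b₂ with hb₃def
      have hnb₁ : ‖b₁‖ ≤ 1 := by
        rw [hb₁def, Prod.norm_def]
        simp [norm_conjE, hvh1]
      have hnb₂ : ‖b₂‖ ≤ 1 := by
        rw [hb₂def, Prod.norm_def]
        simp [hvh1]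
      have hb₃pair : b₃ = (vh, conjE vh) := by
        rw [hb₃def, hb₁def, hb₂def, Prod.mk_add_mk, zero_add, add_zero]
      have hnb₃ : ‖b₃‖ ≤ 1 := by
        rw [hb₃pair, Prod.norm_def]
        simp [norm_conjE, hvh1]
      have ha3 : ‖a‖ < δ := by
        rw [hadef, Prod.norm_def]
        simp only [norm_conjE, max_self]
        exact hz
      have hTle : T < 2 * δ := by
        rw [hTdef]
        calc ‖w - z‖ ≤ ‖w‖ + ‖z‖ := norm_sub_le _ _
          _ < 2 * δ := by linarith
      have hqmem : ∀ (b : EuclideanSpace ℂ (Fin n) × EuclideanSpace ℂ (Fin n)), ‖b‖ ≤ 1 →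
          ∀ t : ℝ, t ∈ Set.Icc 0 T → ‖a + ((t:ℝ):ℂ) • b‖ ≤ 3 * δ := by
        intro b hb t ht
        have habs : ‖((t:ℝ):ℂ)‖ = |t| := by simp
        calc ‖a + ((t:ℝ):ℂ) • b‖ ≤ ‖a‖ + ‖((t:ℝ):ℂ) • b‖ := norm_add_le _ _
          _ = ‖a‖ + |t| * ‖b‖ := by rw [norm_smul, habs]
          _ ≤ δ + T * 1 := by
              have h1 : |t| ≤ T := by
                rw [_root_.abs_of_nonneg ht.1]; exact ht.2
              have := mul_le_mul h1 hb (norm_nonneg b) hT.le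
              nlinarith [ha3]
          _ ≤ 3 * δ := by nlinarith [hTle]
      have haW : a ∈ W := by
        apply hballW
        rw [mem_ball, hzero, dist_zero_right]
        exact ha3.trans hδδ₁
      -- slice domains
      have hopenb : ∀ b : EuclideanSpace ℂ (Fin n) × EuclideanSpace ℂ (Fin n),
          IsOpen {s : ℂ | a + s • b ∈ Metric.ball ((0,0) :
            EuclideanSpace ℂ (Fin n) × EuclideanSpace ℂ (Fin n)) δ₁} := by
        intro b
        exact isOpen_ball.preimage (continuous_const.add (continuous_id.smul continuous_const))
      have hsliceb : ∀ b : EuclideanSpace ℂ (Fin n) × EuclideanSpace ℂ (Fin n),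
          DifferentiableOn ℂ (fun s : ℂ => r (a + s • b)) {s : ℂ | a + s • b ∈ Metric.ball ((0,0) :
            EuclideanSpace ℂ (Fin n) × EuclideanSpace ℂ (Fin n)) δ₁} := by
        intro b
        apply DifferentiableOn.comp (hr.mono hballW)
        · intro s _
          exact (((differentiable_const a).add
            (differentiable_id.smul_const b)) s).differentiableWithinAt
        · intro s hs
          exact hs
      have hanalb : ∀ b : EuclideanSpace ℂ (Fin n) × EuclideanSpace ℂ (Fin n),
          AnalyticOnNhd ℂ (fun s : ℂ => r (a + s • b)) {s : ℂ | a + s • b ∈ Metric.ball ((0,0) :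
            EuclideanSpace ℂ (Fin n) × EuclideanSpace ℂ (Fin n)) δ₁} :=
        fun b => (hsliceb b).analyticOnNhd (hopenb b)
      have hmemt : ∀ (b : EuclideanSpace ℂ (Fin n) × EuclideanSpace ℂ (Fin n)), ‖b‖ ≤ 1 →
          ∀ t : ℝ, t ∈ Set.Icc 0 T → ((t:ℝ):ℂ) ∈ {s : ℂ | a + s • b ∈ Metric.ball ((0,0) :
            EuclideanSpace ℂ (Fin n) × EuclideanSpace ℂ (Fin n)) δ₁} := by
        intro b hb t ht
        have h1 := hqmem b hb t ht
        show a + ((t:ℝ):ℂ) • b ∈ Metric.ball _ δ₁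
        rw [mem_ball, hzero, dist_zero_right]
        have : (3:ℝ) * δ < δ₁ := by linarith [hδle₁, hδ₁pos]
        linarith
      have hder1 : ∀ (b : EuclideanSpace ℂ (Fin n) × EuclideanSpace ℂ (Fin n)), ‖b‖ ≤ 1 →
          ∀ t ∈ Set.Icc 0 T, HasDerivAt (fun s : ℝ => r (a + ((s:ℝ):ℂ) • b))
            (deriv (fun s : ℂ => r (a + s • b)) ((t:ℝ):ℂ)) t := by
        intro b hb t ht
        exact (((hanalb b) _ (hmemt b hb t ht)).differentiableAt.hasDerivAt).comp_ofReal
      have hder2 : ∀ (b : EuclideanSpace ℂ (Fin n) × EuclideanSpace ℂ (Fin n)), ‖b‖ ≤ 1 →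
          ∀ t ∈ Set.Icc 0 T, HasDerivAt (fun s : ℝ => deriv (fun s' : ℂ => r (a + s' • b)) ((s:ℝ):ℂ))
            (deriv (deriv (fun s' : ℂ => r (a + s' • b))) ((t:ℝ):ℂ)) t := by
        intro b hb t ht
        exact ((((hanalb b).deriv) _ (hmemt b hb t ht)).differentiableAt.hasDerivAt).comp_ofReal
      have hcmp : ∀ (b : EuclideanSpace ℂ (Fin n) × EuclideanSpace ℂ (Fin n)), ‖b‖ ≤ 1 →
          ∀ t ∈ Set.Icc 0 T,
          ‖deriv (deriv (fun s' : ℂ => r (a + s' • b))) ((t:ℝ):ℂ) - B b b‖ ≤ c / 8 := by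
        intro b hb t ht
        have h := deriv2_comp_const_add (fun s' : ℂ => r (a + s' • b)) ((t:ℝ):ℂ)
        have hfun2 : (fun s : ℂ => (fun s' : ℂ => r (a + s' • b)) (((t:ℝ):ℂ) + s)) =
            (fun s : ℂ => r ((a + ((t:ℝ):ℂ) • b) + s • b)) := by
          funext s
          simp only []
          rw [add_smul, add_assoc]
        rw [hfun2] at h
        rw [← h]
        exact CMP _ (hqmem b hb t ht) b hb
      -- derivative at 0 of the first-order data
      have hD0 : (deriv (fun s : ℂ => r (a + s • b₁)) (((0:ℝ):ℝ):ℂ) +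
          deriv (fun s : ℂ => r (a + s • b₂)) (((0:ℝ):ℝ):ℂ) -
          deriv (fun s : ℂ => r (a + s • b₃)) (((0:ℝ):ℝ):ℂ)).re = 0 := by
        have hra : DifferentiableAt ℂ r (a + (0:ℂ) • b₁) := by
          simp only [zero_smul, add_zero]
          exact (hr a haW).differentiableAt (hW.mem_nhds haW)
        have hd : ∀ b : EuclideanSpace ℂ (Fin n) × EuclideanSpace ℂ (Fin n),
            deriv (fun s : ℂ => r (a + s • b)) 0 = fderiv ℂ r a b := by
          intro b
          have hra' : DifferentiableAt ℂ r (a + (0:ℂ) • b) := by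
            simp only [zero_smul, add_zero]
            exact (hr a haW).differentiableAt (hW.mem_nhds haW)
          have h := (slice_hasDerivAt hra').deriv
          rw [h]
          congr 1
          simp
        push_cast
        rw [hd b₁, hd b₂, hd b₃, hb₃def, map_add]
        simp
      -- second derivative bound
      have hEt0 : ∀ t ∈ Set.Icc 0 T,
          (deriv (deriv (fun s' : ℂ => r (a + s' • b₁))) ((t:ℝ):ℂ) +
           deriv (deriv (fun s' : ℂ => r (a + s' • b₂))) ((t:ℝ):ℂ) -
           deriv (deriv (fun s' : ℂ => r (a + s' • b₃))) ((t:ℝ):ℂ)).re ≤ 0 := by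
        intro t ht
        have h1 := hcmp b₁ hnb₁ t ht
        have h2 := hcmp b₂ hnb₂ t ht
        have h3 := hcmp b₃ hnb₃ t ht
        set d₁ := deriv (deriv (fun s' : ℂ => r (a + s' • b₁))) ((t:ℝ):ℂ) with hd₁
        set d₂ := deriv (deriv (fun s' : ℂ => r (a + s' • b₂))) ((t:ℝ):ℂ) with hd₂
        set d₃ := deriv (deriv (fun s' : ℂ => r (a + s' • b₃))) ((t:ℝ):ℂ) with hd₃
        have hmain : (B b₁ b₁ + B b₂ b₂ - B b₃ b₃ : ℂ).re = -(2 * (B b₂ b₁).re) := by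
          have hexp : B b₃ b₃ = B b₁ b₁ + B b₁ b₂ + B b₂ b₁ + B b₂ b₂ := by
            rw [hb₃def, map_add]
            simp only [ContinuousLinearMap.add_apply, map_add]
            ring
          rw [hexp, hsymm b₁ b₂]
          simp only [Complex.add_re, Complex.sub_re]
          ring
        have hminv : c ≤ 2 * (B b₂ b₁).re := by
          have hvs : vh ∈ sphere (0 : EuclideanSpace ℂ (Fin n)) 1 := by
            rw [mem_sphere, dist_zero_right]; exact hvh1
          have h := hmin vh hvs
          rw [hφdef] at h
          rw [hb₂def, hb₁def]
          exact h
        have hdecomp : (d₁ + d₂ - d₃).re = (B b₁ b₁ + B b₂ b₂ - B b₃ b₃ : ℂ).re +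
            ((d₁ - B b₁ b₁) + (d₂ - B b₂ b₂) - (d₃ - B b₃ b₃)).re := by
          rw [← Complex.add_re]
          congr 1
          ring
        have herr : ((d₁ - B b₁ b₁) + (d₂ - B b₂ b₂) - (d₃ - B b₃ b₃)).re ≤ 3 * (c / 8) := by
          have hre : ((d₁ - B b₁ b₁) + (d₂ - B b₂ b₂) - (d₃ - B b₃ b₃)).re ≤
              ‖(d₁ - B b₁ b₁) + (d₂ - B b₂ b₂) - (d₃ - B b₃ b₃)‖ :=
            Complex.re_le_norm _
          have htri : ‖(d₁ - B b₁ b₁) + (d₂ - B b₂ b₂) - (d₃ - B b₃ b₃)‖ ≤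
              ‖d₁ - B b₁ b₁‖ + ‖d₂ - B b₂ b₂‖ + ‖d₃ - B b₃ b₃‖ :=
            (norm_sub_le _ _).trans (add_le_add (norm_add_le _ _) le_rfl)
          linarith
        rw [hdecomp, hmain]
        linarith
      -- antitone arguments
      have hDanti : AntitoneOn (fun t : ℝ => (deriv (fun s : ℂ => r (a + s • b₁)) ((t:ℝ):ℂ) +
          deriv (fun s : ℂ => r (a + s • b₂)) ((t:ℝ):ℂ) -
          deriv (fun s : ℂ => r (a + s • b₃)) ((t:ℝ):ℂ)).re) (Set.Icc 0 T) := by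
        have hDd : ∀ t ∈ Set.Icc 0 T, HasDerivAt (fun t : ℝ =>
            (deriv (fun s : ℂ => r (a + s • b₁)) ((t:ℝ):ℂ) +
             deriv (fun s : ℂ => r (a + s • b₂)) ((t:ℝ):ℂ) -
             deriv (fun s : ℂ => r (a + s • b₃)) ((t:ℝ):ℂ)).re)
            ((deriv (deriv (fun s' : ℂ => r (a + s' • b₁))) ((t:ℝ):ℂ) +
              deriv (deriv (fun s' : ℂ => r (a + s' • b₂))) ((t:ℝ):ℂ) -
              deriv (deriv (fun s' : ℂ => r (a + s' • b₃))) ((t:ℝ):ℂ)).re) t := by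
          intro t ht
          have hsum := ((hder2 b₁ hnb₁ t ht).add (hder2 b₂ hnb₂ t ht)).sub (hder2 b₃ hnb₃ t ht)
          exact Complex.reCLM.hasFDerivAt.comp_hasDerivAt t hsum
        apply antitoneOn_of_deriv_nonpos (convex_Icc 0 T)
        · intro t ht
          exact (hDd t ht).continuousAt.continuousWithinAt
        · rw [interior_Icc]
          intro t ht
          exact (hDd t (Set.Ioo_subset_Icc_self ht)).differentiableAt.differentiableWithinAt
        · rw [interior_Icc]
          intro t ht
          rw [(hDd t (Set.Ioo_subset_Icc_self ht)).deriv]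
          exact hEt0 t (Set.Ioo_subset_Icc_self ht)
      have hDle : ∀ t ∈ Set.Icc 0 T, (deriv (fun s : ℂ => r (a + s • b₁)) ((t:ℝ):ℂ) +
          deriv (fun s : ℂ => r (a + s • b₂)) ((t:ℝ):ℂ) -
          deriv (fun s : ℂ => r (a + s • b₃)) ((t:ℝ):ℂ)).re ≤ 0 := by
        intro t ht
        have h := hDanti (Set.left_mem_Icc.mpr hT.le) ht ht.1
        calc (deriv (fun s : ℂ => r (a + s • b₁)) ((t:ℝ):ℂ) +
            deriv (fun s : ℂ => r (a + s • b₂)) ((t:ℝ):ℂ) -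
            deriv (fun s : ℂ => r (a + s • b₃)) ((t:ℝ):ℂ)).re ≤ _ := h
          _ = 0 := hD0
      have hGanti : AntitoneOn (fun t : ℝ => (r (a + ((t:ℝ):ℂ) • b₁) + r (a + ((t:ℝ):ℂ) • b₂) -
          r (a + ((t:ℝ):ℂ) • b₃)).re) (Set.Icc 0 T) := by
        have hGd : ∀ t ∈ Set.Icc 0 T, HasDerivAt (fun t : ℝ =>
            (r (a + ((t:ℝ):ℂ) • b₁) + r (a + ((t:ℝ):ℂ) • b₂) - r (a + ((t:ℝ):ℂ) • b₃)).re)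
            ((deriv (fun s : ℂ => r (a + s • b₁)) ((t:ℝ):ℂ) +
              deriv (fun s : ℂ => r (a + s • b₂)) ((t:ℝ):ℂ) -
              deriv (fun s : ℂ => r (a + s • b₃)) ((t:ℝ):ℂ)).re) t := by
          intro t ht
          have hsum := ((hder1 b₁ hnb₁ t ht).add (hder1 b₂ hnb₂ t ht)).sub (hder1 b₃ hnb₃ t ht)
          exact Complex.reCLM.hasFDerivAt.comp_hasDerivAt t hsum
        apply antitoneOn_of_deriv_nonpos (convex_Icc 0 T)
        · intro t ht
          exact (hGd t ht).continuousAt.continuousWithinAt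
        · rw [interior_Icc]
          intro t ht
          exact (hGd t (Set.Ioo_subset_Icc_self ht)).differentiableAt.differentiableWithinAt
        · rw [interior_Icc]
          intro t ht
          rw [(hGd t (Set.Ioo_subset_Icc_self ht)).deriv]
          exact hDle t (Set.Ioo_subset_Icc_self ht)
      have hfin := hGanti (Set.left_mem_Icc.mpr hT.le) (Set.right_mem_Icc.mpr hT.le) hT.le
      -- compute the endpoints
      have hzw' : z + (w - z) = w := by abel
      have hend₁ : a + ((T:ℝ):ℂ) • b₁ = ((z, conjE w) :
          EuclideanSpace ℂ (Fin n) × EuclideanSpace ℂ (Fin n)) := by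
        rw [hb₁def, hadef, Prod.smul_mk, smul_zero, Prod.mk_add_mk, add_zero]
        congr 1
        rw [hcoe, ← conjE_real_smul, hTv, ← conjE_add, hzw']
      have hend₂ : a + ((T:ℝ):ℂ) • b₂ = ((w, conjE z) :
          EuclideanSpace ℂ (Fin n) × EuclideanSpace ℂ (Fin n)) := by
        rw [hb₂def, hadef, Prod.smul_mk, smul_zero, Prod.mk_add_mk, add_zero, hcoe, hTv, hzw']
      have hend₃ : a + ((T:ℝ):ℂ) • b₃ = ((w, conjE w) :
          EuclideanSpace ℂ (Fin n) × EuclideanSpace ℂ (Fin n)) := by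
        rw [hb₃pair, hadef, Prod.smul_mk, Prod.mk_add_mk]
        congr 1
        · rw [hcoe, hTv, hzw']
        · rw [hcoe, ← conjE_real_smul, hTv, ← conjE_add, hzw']
      have hzeroend : ∀ b : EuclideanSpace ℂ (Fin n) × EuclideanSpace ℂ (Fin n),
          a + (((0:ℝ)):ℂ) • b = a := by
        intro b
        simp
      -- conclude
      have hG0 : (r (a + (((0:ℝ)):ℂ) • b₁) + r (a + (((0:ℝ)):ℂ) • b₂) -
          r (a + (((0:ℝ)):ℂ) • b₃)).re = (r (z, conjE z)).re := by
        rw [hzeroend b₁, hzeroend b₂, hzeroend b₃, add_sub_cancel_right, hadef]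
      have hGT : (r (a + ((T:ℝ):ℂ) • b₁) + r (a + ((T:ℝ):ℂ) • b₂) -
          r (a + ((T:ℝ):ℂ) • b₃)).re =
          (r (z, conjE w) + r (w, conjE z) - r (w, conjE w)).re := by
        rw [hend₁, hend₂, hend₃]
      calc (r (z, conjE w) + r (w, conjE z) - r (w, conjE w)).re
          = (r (a + ((T:ℝ):ℂ) • b₁) + r (a + ((T:ℝ):ℂ) • b₂) -
            r (a + ((T:ℝ):ℂ) • b₃)).re := hGT.symm
        _ ≤ (r (a + (((0:ℝ)):ℂ) • b₁) + r (a + (((0:ℝ)):ℂ) • b₂) -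
            r (a + (((0:ℝ)):ℂ) • b₃)).re := hfin
        _ = (r (z, conjE z)).re := hG0

end Key

/-- near `0`, for `z` with `ρ(z) < 0`, the Segre variety `Q_z` lies
in `{ρ > 0}`, with the quantitative bound `ρ(w) ≥ -ρ(z) > 0`; and assuming the
comparability `|ρ| ∼ dist(·, M)` one gets `dist(w, M) ≥ c · dist(z, M)`. -/
theorem segre_variety_of_inner_point_in_plus_side
    (n : ℕ) (hn : 1 ≤ n)
    (U : Set (EuclideanSpace ℂ (Fin n))) (hU : IsOpen U)
    (h0U : (0 : EuclideanSpace ℂ (Fin n)) ∈ U)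
    (r : EuclideanSpace ℂ (Fin n) × EuclideanSpace ℂ (Fin n) → ℂ)
    (hr : DifferentiableOn ℂ r (U ×ˢ U))
    (hherm : ∀ z ∈ U, ∀ ω ∈ U, r (z, ω) = (starRingEnd ℂ) (r (conjE ω, conjE z)))
    (hpsh : ∀ v : EuclideanSpace ℂ (Fin n), v ≠ 0 →
      0 < (fderiv ℂ (fderiv ℂ r) (0, 0) (v, 0) (0, conjE v)).re)
    (ρ : EuclideanSpace ℂ (Fin n) → ℝ) (hρ : ∀ z, ρ z = (r (z, conjE z)).re)
    (M : Set (EuclideanSpace ℂ (Fin n))) (hM : M = {z ∈ U | ρ z = 0}) :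
    ∃ V : Set (EuclideanSpace ℂ (Fin n)), IsOpen V ∧
      (0 : EuclideanSpace ℂ (Fin n)) ∈ V ∧ V ⊆ U ∧
      (∀ z ∈ V, ρ z < 0 → ∀ w ∈ V, r (w, conjE z) = 0 →
        0 < -ρ z ∧ -ρ z ≤ ρ w) ∧
      (∀ κ K : ℝ, 0 < κ → 0 < K →
        (∀ ζ ∈ V, κ * Metric.infDist ζ M ≤ |ρ ζ| ∧ |ρ ζ| ≤ K * Metric.infDist ζ M) →
        ∃ c : ℝ, 0 < c ∧ ∀ z ∈ V, ρ z < 0 → ∀ w ∈ V, r (w, conjE z) = 0 →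
          c * Metric.infDist z M ≤ Metric.infDist w M) := by
  obtain ⟨δ, hδpos, hsub, hkey⟩ := key_ineq n hn U hU h0U r hr hpsh
  set V := Metric.ball (0 : EuclideanSpace ℂ (Fin n)) δ with hVdef
  have hVU : V ⊆ U := hsub
  have hVconj : ∀ x ∈ V, conjE x ∈ V := by
    intro x hx
    rw [hVdef, mem_ball, dist_zero_right] at hx ⊢
    rw [norm_conjE]
    exact hx
  have hmain : ∀ z ∈ V, ρ z < 0 → ∀ w ∈ V, r (w, conjE z) = 0 →
      0 < -ρ z ∧ -ρ z ≤ ρ w := by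
    intro z hz hρz w hw hrw
    have hz0 : r (z, conjE w) = 0 := by
      have h := hherm z (hVU hz) (conjE w) (hVU (hVconj w hw))
      rw [conjE_conjE] at h
      rw [h, hrw]
      simp
    have h := hkey z hz w hw
    rw [hz0, hrw] at h
    simp only [zero_add, zero_sub, Complex.neg_re] at h
    constructor
    · linarith
    · rw [hρ z, hρ w]
      linarith [h]
  refine ⟨V, Metric.isOpen_ball, Metric.mem_ball_self hδpos, hVU, hmain, ?_⟩
  intro κ K hκ hK hcomp
  refine ⟨κ / K, by positivity, ?_⟩
  intro z hz hρz w hw hrw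
  obtain ⟨h1, h2⟩ := hmain z hz hρz w hw hrw
  obtain ⟨hza, _⟩ := hcomp z hz
  obtain ⟨_, hwb⟩ := hcomp w hw
  have habsz : |ρ z| = -ρ z := abs_of_neg hρz
  have hρw : 0 < ρ w := lt_of_lt_of_le h1 h2
  have habsw : |ρ w| = ρ w := abs_of_pos hρw
  have hchain : κ * Metric.infDist z M ≤ K * Metric.infDist w M := by
    calc κ * Metric.infDist z M ≤ |ρ z| := hza
      _ = -ρ z := habsz
      _ ≤ ρ w := h2
      _ = |ρ w| := habsw.symm
      _ ≤ K * Metric.infDist w M := hwb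
  rw [div_mul_eq_mul_div, div_le_iff₀ hK]
  linarith
end

section
/- Let U' ⊆ ℂᴺ be open and let ρ' : U' → ℝ be twice continuously differentiable with positive-definite Levi form at every point: for every p ∈ U' and every nonzero v ∈ ℂᴺ, H_p(v,v) + H_p(i·v, i·v) > 0, where H_p is the second real Fréchet derivative (real Hessian bilinear form) of ρ' at p. Let D ⊆ ℂ be a nonempty connected open set and g : D → ℂᴺ a holomorphic map with g(D) ⊆ U' and ρ'(g(ζ)) = 0 for all ζ ∈ D. Then g is constant. (Equivalently: a strictly pseudoconvex hypersurface {ρ' = 0} contains no complex-analytic set of positive dimension.) -/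
open Complex ContinuousLinearMap

set_option maxHeartbeats 1000000 in
/-- a strictly pseudoconvex hypersurface `{ρ' = 0}` contains no
complex-analytic set of positive dimension: any holomorphic map `g` from a
nonempty connected open `D ⊆ ℂ` into `{ρ' = 0}` is constant. -/
theorem strictly_pseudoconvex_no_analytic_disc
    (N : ℕ)
    (U' : Set (EuclideanSpace ℂ (Fin N))) (hU' : IsOpen U')
    (ρ' : EuclideanSpace ℂ (Fin N) → ℝ) (hρ' : ContDiffOn ℝ 2 ρ' U')
    (hLevi : ∀ p ∈ U', ∀ v : EuclideanSpace ℂ (Fin N), v ≠ 0 →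
      0 < fderiv ℝ (fderiv ℝ ρ') p v v
          + fderiv ℝ (fderiv ℝ ρ') p (Complex.I • v) (Complex.I • v))
    (D : Set ℂ) (hD : IsOpen D) (hDconn : IsConnected D)
    (g : ℂ → EuclideanSpace ℂ (Fin N)) (hg : DifferentiableOn ℂ g D)
    (hgD : g '' D ⊆ U') (hgρ : ∀ ζ ∈ D, ρ' (g ζ) = 0) :
    ∀ ζ₁ ∈ D, ∀ ζ₂ ∈ D, g ζ₁ = g ζ₂ := by
  have hgan : AnalyticOnNhd ℂ g D := hg.analyticOnNhd hD
  have key : ∀ ζ ∈ D, fderiv ℂ g ζ = 0 := by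
    intro ζ hζ
    have hpU : g ζ ∈ U' := hgD ⟨ζ, hζ, rfl⟩
    have hgdC : DifferentiableAt ℂ g ζ := hg.differentiableAt (hD.mem_nhds hζ)
    have hgdR : DifferentiableAt ℝ g ζ := hgdC.restrictScalars ℝ
    have hg'an : AnalyticOnNhd ℂ (fderiv ℂ g) D := hgan.fderiv_of_isOpen hD
    have hg'dC : DifferentiableAt ℂ (fderiv ℂ g) ζ := (hg'an ζ hζ).differentiableAt
    have hρ1 : ContDiffOn ℝ 1 (fderiv ℝ ρ') U' := hρ'.fderiv_of_isOpen hU' (by norm_num)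
    have hρ'dAt : ∀ q ∈ U', DifferentiableAt ℝ ρ' q := fun q hq =>
      ((hρ'.differentiableOn two_ne_zero) q hq).differentiableAt (hU'.mem_nhds hq)
    have hρ''dAt : DifferentiableAt ℝ (fderiv ℝ ρ') (g ζ) :=
      ((hρ1.differentiableOn one_ne_zero) (g ζ) hpU).differentiableAt (hU'.mem_nhds hpU)
    set A : ℂ → (EuclideanSpace ℂ (Fin N) →L[ℝ] ℝ) := fun z => fderiv ℝ ρ' (g z) with hA_def
    set B : ℂ → (ℂ →L[ℝ] EuclideanSpace ℂ (Fin N)) := fun z => fderiv ℝ g z with hB_def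
    have hAd : DifferentiableAt ℝ A ζ := hρ''dAt.comp ζ hgdR
    have hAderiv : fderiv ℝ A ζ = (fderiv ℝ (fderiv ℝ ρ') (g ζ)).comp (fderiv ℝ g ζ) :=
      fderiv_comp ζ hρ''dAt hgdR
    -- B and its derivative
    set L : (ℂ →L[ℂ] EuclideanSpace ℂ (Fin N)) →L[ℝ] (ℂ →L[ℝ] EuclideanSpace ℂ (Fin N)) :=
      ContinuousLinearMap.restrictScalarsL ℂ ℂ (EuclideanSpace ℂ (Fin N)) ℝ ℝ with hL_def
    have hBev : B =ᶠ[nhds ζ] fun z => L (fderiv ℂ g z) := by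
      apply Filter.eventuallyEq_of_mem (hD.mem_nhds hζ)
      intro z hz
      exact (hg.differentiableAt (hD.mem_nhds hz)).fderiv_restrictScalars ℝ
    have hCd : DifferentiableAt ℝ (fun z => L (fderiv ℂ g z)) ζ :=
      L.differentiableAt.comp ζ (hg'dC.restrictScalars ℝ)
    have hBd : DifferentiableAt ℝ B ζ := hBev.differentiableAt_iff.mpr hCd
    set G : ℂ →L[ℂ] (ℂ →L[ℂ] EuclideanSpace ℂ (Fin N)) := fderiv ℂ (fderiv ℂ g) ζ with hG_def
    have hBderiv : ∀ u v : ℂ, (fderiv ℝ B ζ u) v = (G u) v := by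
      intro u v
      rw [hBev.fderiv_eq]
      have hLC : fderiv ℝ (fun z => L (fderiv ℂ g z)) ζ
          = L.comp (fderiv ℝ (fderiv ℂ g) ζ) :=
        (L.hasFDerivAt.comp ζ ((hg'dC.restrictScalars ℝ).hasFDerivAt)).fderiv
      rw [hLC, hg'dC.fderiv_restrictScalars ℝ]
      rfl
    set w : EuclideanSpace ℂ (Fin N) := fderiv ℂ g ζ 1 with hw_def
    have hBapp : ∀ u : ℂ, B ζ u = u • w := by
      intro u
      have : B ζ = (fderiv ℂ g ζ).restrictScalars ℝ := hgdC.fderiv_restrictScalars ℝ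
      rw [this]
      show fderiv ℂ g ζ u = u • w
      rw [show u = u • (1:ℂ) by simp, map_smul, hw_def]
      simp
    -- second derivative of ρ' ∘ g vanishes
    have hF1eq : ∀ z ∈ D,
        fderiv ℝ (fun z => ρ' (g z)) z = (A z).comp (B z) := by
      intro z hz
      exact fderiv_comp z (hρ'dAt (g z) (hgD ⟨z, hz, rfl⟩))
        ((hg.differentiableAt (hD.mem_nhds hz)).restrictScalars ℝ)
    have hF1zero : ∀ z ∈ D, fderiv ℝ (fun z => ρ' (g z)) z = 0 := by
      intro z hz
      have hev : (fun z => ρ' (g z)) =ᶠ[nhds z] fun _ => (0:ℝ) :=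
        Filter.eventuallyEq_of_mem (hD.mem_nhds hz) (fun y hy => hgρ y hy)
      rw [hev.fderiv_eq]
      exact fderiv_const_apply 0
    have hF2zero : fderiv ℝ (fun z => (A z).comp (B z)) ζ = 0 := by
      have h1 : (fun z => (A z).comp (B z)) =ᶠ[nhds ζ] fderiv ℝ (fun z => ρ' (g z)) :=
        Filter.eventuallyEq_of_mem (hD.mem_nhds hζ) (fun y hy => (hF1eq y hy).symm)
      have h2 : fderiv ℝ (fun z => ρ' (g z)) =ᶠ[nhds ζ] fun _ => (0 : ℂ →L[ℝ] ℝ) :=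
        Filter.eventuallyEq_of_mem (hD.mem_nhds hζ) (fun y hy => hF1zero y hy)
      rw [h1.fderiv_eq, h2.fderiv_eq]
      exact fderiv_const_apply 0
    set H := fderiv ℝ (fderiv ℝ ρ') (g ζ) with hH_def
    have hmain : ∀ u : ℂ, (A ζ) ((G u) u) + H (u • w) (u • w) = 0 := by
      intro u
      have h0 : (fderiv ℝ (fun z => (A z).comp (B z)) ζ u) u = 0 := by
        rw [hF2zero]; rfl
      rw [fderiv_clm_comp hAd hBd] at h0
      have h1 : (A ζ) ((fderiv ℝ B ζ u) u) + (fderiv ℝ A ζ u) (B ζ u) = 0 := by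
        simp only [ContinuousLinearMap.add_apply, ContinuousLinearMap.coe_comp',
          Function.comp_apply, ContinuousLinearMap.compL_apply,
          ContinuousLinearMap.flip_apply] at h0
        exact h0
      rw [hBderiv u u, hAderiv] at h1
      simp only [ContinuousLinearMap.coe_comp', Function.comp_apply] at h1
      rw [show (fderiv ℝ g ζ) u = u • w from hBapp u] at h1
      exact h1
      -- note: (fderiv ℝ A ζ u) = H.comp (fderiv ℝ g ζ) u = H (B ζ u)
    have hGII : (G Complex.I) Complex.I = -((G 1) 1) := by
      have h1 : G Complex.I = Complex.I • (G 1) := by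
        simpa using G.map_smul Complex.I (1:ℂ)
      have h2 : (G 1) Complex.I = Complex.I • ((G 1) 1) := by
        simpa using (G 1).map_smul Complex.I (1:ℂ)
      rw [h1, ContinuousLinearMap.smul_apply, h2, smul_smul, Complex.I_mul_I, neg_one_smul]
    have e1 := hmain 1
    have e2 := hmain Complex.I
    rw [hGII, map_neg] at e2
    have hsum : H w w + H (Complex.I • w) (Complex.I • w) = 0 := by
      simp only [one_smul] at e1
      linarith [e1, e2]
    have hwzero : w = 0 := by
      by_contra hw
      have := hLevi (g ζ) hpU w hw
      rw [hH_def] at hsum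
      linarith
    apply ContinuousLinearMap.ext_ring
    rw [ContinuousLinearMap.zero_apply]; exact hwzero
  -- conclude: g locally constant, then identity theorem
  intro ζ₁ hζ₁ ζ₂ hζ₂
  obtain ⟨ε, hε, hball⟩ := Metric.isOpen_iff.1 hD ζ₁ hζ₁
  have hloc : g =ᶠ[nhds ζ₁] fun _ => g ζ₁ := by
    apply Filter.eventuallyEq_of_mem (Metric.ball_mem_nhds ζ₁ hε)
    intro z hz
    exact (convex_ball ζ₁ ε).is_const_of_fderivWithin_eq_zero (hg.mono hball)
      (fun x hx => by
        rw [fderivWithin_of_isOpen Metric.isOpen_ball hx]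
        exact key x (hball hx))
      hz (Metric.mem_ball_self hε)
  have heq := hgan.eqOn_of_preconnected_of_eventuallyEq (analyticOnNhd_const)
    hDconn.isPreconnected hζ₁ hloc
  exact (heq hζ₁).trans (heq hζ₂).symm
end
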